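/- Let A₁, …, A_n be positive semidefinite m × m complex (Hermitian) matrices and B a Hermitian m × m matrix. Then the polynomial f(z₁,…,z_n) = det(z₁A₁ + ⋯ + z_nA_n + B) is either identically zero or real stable, i.e., it has real coefficients and f(z₁,…,z_n) ≠ 0 whenever Im(z_j) > 0 for all j. -/

import Mathlib

open MvPolynomial ComplexOrder

/-- A polynomial `f ∈ ℂ[z₁,…,zₙ]` is stable if it does not vanish whenever all
variables have positive imaginary part. -/
def MvStable {n : ℕ} (f : MvPolynomial (Fin n) ℂ) : Prop :=
  ∀ z : Fin n → ℂ, (∀ j, 0 < (z j).im) → MvPolynomial.eval z f ≠ 0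

open Matrix in
private lemma aux_sum_mulVec {n m : ℕ} (w : Fin n → ℂ) (A : Fin n → Matrix (Fin m) (Fin m) ℂ)
    (v : Fin m → ℂ) : (∑ j, w j • A j) *ᵥ v = ∑ j, w j • (A j *ᵥ v) := by
  ext i
  simp only [Matrix.mulVec, dotProduct, Matrix.sum_apply, Matrix.smul_apply,
    Finset.sum_apply, Pi.smul_apply, smul_eq_mul, Finset.sum_mul, Finset.mul_sum]
  rw [Finset.sum_comm]
  exact Finset.sum_congr rfl fun j _ => Finset.sum_congr rfl fun k _ => by ring

open Matrix in
private lemma aux_dot_sum {m n : ℕ} (u : Fin m → ℂ) (w : Fin n → ℂ) (f : Fin n → Fin m → ℂ) :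
    u ⬝ᵥ (∑ j, w j • f j) = ∑ j, w j * (u ⬝ᵥ f j) := by
  simp only [dotProduct, Finset.sum_apply, Pi.smul_apply, smul_eq_mul, Finset.mul_sum]
  rw [Finset.sum_comm]
  exact Finset.sum_congr rfl fun k _ => Finset.sum_congr rfl fun j _ => by ring

open Matrix

theorem stmt0 (n m : ℕ) (A : Fin n → Matrix (Fin m) (Fin m) ℂ)
    (hA : ∀ j, (A j).PosSemidef) (B : Matrix (Fin m) (Fin m) ℂ) (hB : B.IsHermitian) :
    let P : MvPolynomial (Fin n) ℂ :=
      (Matrix.of fun i k : Fin m =>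
        (∑ j, MvPolynomial.X j * MvPolynomial.C (A j i k)) + MvPolynomial.C (B i k)).det
    P = 0 ∨ ((∀ d, (P.coeff d).im = 0) ∧ MvStable P) := by
  intro P
  set M : Matrix (Fin m) (Fin m) (MvPolynomial (Fin n) ℂ) :=
    Matrix.of fun i k : Fin m =>
      (∑ j, MvPolynomial.X j * MvPolynomial.C (A j i k)) + MvPolynomial.C (B i k) with hM
  -- evaluation of P
  have hEval : ∀ z : Fin n → ℂ,
      MvPolynomial.eval z P = ((∑ j, z j • A j) + B).det := by
    intro z
    have : MvPolynomial.eval z M.det = (M.map (MvPolynomial.eval z)).det :=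
      RingHom.map_det (MvPolynomial.eval z) M
    rw [show P = M.det from rfl, this]
    congr 1
    ext i k
    simp [hM, Matrix.sum_apply, mul_comm]
  -- real coefficients
  have hcoeff : ∀ d, (P.coeff d).im = 0 := by
    have hmap : MvPolynomial.map (starRingEnd ℂ) P = P := by
      have h1 : MvPolynomial.map (starRingEnd ℂ) M.det
          = (M.map (MvPolynomial.map (starRingEnd ℂ))).det :=
        RingHom.map_det (MvPolynomial.map (starRingEnd ℂ)) M
      have h2 : M.map (MvPolynomial.map (starRingEnd ℂ)) = M.transpose := by
        ext i k
        have hAik : ∀ j, (starRingEnd ℂ) (A j i k) = A j k i := by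
          intro j
          have := congrFun (congrFun (hA j).1 k) i
          simpa [Matrix.conjTranspose_apply] using this
        have hBik : (starRingEnd ℂ) (B i k) = B k i := by
          have := congrFun (congrFun hB k) i
          simpa [Matrix.conjTranspose_apply] using this
        simp [hM, Matrix.transpose_apply, hAik, hBik]
      rw [show P = M.det from rfl, h1, h2, Matrix.det_transpose]
    intro d
    have := congrArg (MvPolynomial.coeff d) hmap
    rw [MvPolynomial.coeff_map] at this
    exact Complex.conj_eq_iff_im.mp this
  by_cases hker : ∃ v : Fin m → ℂ, v ≠ 0 ∧ (∀ j, A j *ᵥ v = 0) ∧ B *ᵥ v = 0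
  · left
    obtain ⟨v, hv, hAv, hBv⟩ := hker
    apply MvPolynomial.funext
    intro z
    rw [hEval z, map_zero, ← Matrix.exists_mulVec_eq_zero_iff]
    refine ⟨v, hv, ?_⟩
    rw [Matrix.add_mulVec, hBv]
    simp [aux_sum_mulVec, hAv]
  · right
    refine ⟨hcoeff, ?_⟩
    intro z hz hPz
    rw [hEval z] at hPz
    obtain ⟨v, hv, hMv⟩ := Matrix.exists_mulVec_eq_zero_iff.mpr hPz
    set a : Fin n → ℂ := fun j => star v ⬝ᵥ A j *ᵥ v with ha
    have haj : ∀ j, 0 ≤ a j := fun j => (hA j).dotProduct_mulVec_nonneg v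
    have hbre : (star v ⬝ᵥ B *ᵥ v).im = 0 := by
      have : (starRingEnd ℂ) (star v ⬝ᵥ B *ᵥ v) = star v ⬝ᵥ B *ᵥ v := by
        calc (starRingEnd ℂ) (star v ⬝ᵥ B *ᵥ v)
            = star (star v ⬝ᵥ B *ᵥ v) := rfl
          _ = star (B *ᵥ v) ⬝ᵥ star (star v) := by rw [star_dotProduct]; simp
          _ = (star v ᵥ* Bᴴ) ⬝ᵥ v := by rw [Matrix.star_mulVec, star_star]
          _ = (star v ᵥ* B) ⬝ᵥ v := by rw [hB]
          _ = star v ⬝ᵥ B *ᵥ v := (Matrix.dotProduct_mulVec _ _ _).symm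
      exact Complex.conj_eq_iff_im.mp this
    have hdot : (∑ j, z j * a j) + star v ⬝ᵥ B *ᵥ v = 0 := by
      have h1 : star v ⬝ᵥ (((∑ j, z j • A j) + B) *ᵥ v) = 0 := by
        rw [hMv, dotProduct_zero]
      rw [Matrix.add_mulVec, aux_sum_mulVec, dotProduct_add, aux_dot_sum] at h1
      exact h1
    have haim : ∀ j, (a j).im = 0 := fun j => ((Complex.nonneg_iff.mp (haj j)).2).symm
    have hare : ∀ j, 0 ≤ (a j).re := fun j => (Complex.nonneg_iff.mp (haj j)).1
    have him : ∑ j, (z j).im * (a j).re = 0 := by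
      have := congrArg Complex.im hdot
      simp only [Complex.add_im, Complex.im_sum, Complex.mul_im, Complex.zero_im, hbre,
        add_zero] at this
      calc ∑ j, (z j).im * (a j).re
          = ∑ j, ((z j).re * (a j).im + (z j).im * (a j).re) := by
            simp [haim]
        _ = 0 := this
    have hterm : ∀ j ∈ Finset.univ, (z j).im * (a j).re = 0 := by
      rw [← Finset.sum_eq_zero_iff_of_nonneg]
      · exact him
      · intro j _
        exact mul_nonneg (le_of_lt (hz j)) (hare j)
    have haz : ∀ j, a j = 0 := by
      intro j
      have := hterm j (Finset.mem_univ j)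
      have hre : (a j).re = 0 := by
        rcases mul_eq_zero.mp this with h | h
        · exact absurd h (ne_of_gt (hz j))
        · exact h
      exact Complex.ext hre (haim j)
    have hAv : ∀ j, A j *ᵥ v = 0 :=
      fun j => ((hA j).dotProduct_mulVec_zero_iff v).mp (haz j)
    have hBv : B *ᵥ v = 0 := by
      have := hMv
      rw [Matrix.add_mulVec, aux_sum_mulVec] at this
      simpa [hAv] using this
    exact hker ⟨v, hv, hAv, hBv⟩
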